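/- Let ψ(X) = ∑_{j ≤ X} A(j) · j^ℓ and θ(X) = ∑_{p ≤ X} A(p) · p^ℓ (the second sum only over primes), where |A(j)| ≤ 4·Λ(j) for all j, Λ the von Mangoldt function, and ℓ ≥ 0 an integer. Then for X ≥ 2, |ψ(X) − θ(X)| ≤ 4 · ∑_{m≥2} ∑_{p ≤ X^{1/m}} p^{ℓm} log(p) ≤ 26.72 · X^{ℓ+1/2} · log(X). -/

import Mathlib

open Finset


/-- Let `ψ(X) = ∑_{j ≤ X} A(j) j^ℓ` and `θ(X) = ∑_{p ≤ X prime} A(p) p^ℓ` where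
`|A(j)| ≤ 4 Λ(j)`.  Assuming the Rosser–Schoenfeld type bound
`∑_{p ≤ Y} p^m log p ≤ 2.01 Y^{m+1}` for `Y ≥ 2`, one has, for `X ≥ 2`,
`|ψ(X) − θ(X)| ≤ 4 ∑_{m ≥ 2} ∑_{p ≤ X^{1/m}} p^{ℓ m} log p ≤ 26.72 X^{ℓ+1/2} log X`. -/
theorem stmt_19 (A : ℕ → ℝ)
    (hA : ∀ j : ℕ, |A j| ≤ 4 * ArithmeticFunction.vonMangoldt j)
    (hRS : ∀ (Y : ℝ) (m : ℕ), 2 ≤ Y →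
      ∑ p ∈ (Finset.Iic ⌊Y⌋₊).filter Nat.Prime, (p : ℝ) ^ m * Real.log p ≤
        2.01 * Y ^ (m + 1))
    (ℓ : ℕ) (X : ℝ) (hX : 2 ≤ X) :
    (|(∑ j ∈ Finset.Icc 1 ⌊X⌋₊, A j * (j : ℝ) ^ ℓ) -
        ∑ p ∈ (Finset.Icc 1 ⌊X⌋₊).filter Nat.Prime, A p * (p : ℝ) ^ ℓ| ≤
      4 * ∑' m : ℕ,
          ∑ p ∈ (Finset.Iic ⌊X ^ (1 / ((m : ℝ) + 2))⌋₊).filter Nat.Prime,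
            (p : ℝ) ^ (ℓ * (m + 2)) * Real.log p) ∧
    (4 * ∑' m : ℕ,
          ∑ p ∈ (Finset.Iic ⌊X ^ (1 / ((m : ℝ) + 2))⌋₊).filter Nat.Prime,
            (p : ℝ) ^ (ℓ * (m + 2)) * Real.log p) ≤
      26.72 * X ^ ((ℓ : ℝ) + 1 / 2) * Real.log X := by
  classical
  have hX0 : (0:ℝ) < X := lt_of_lt_of_le two_pos hX
  have hX1 : (1:ℝ) ≤ X := le_trans one_le_two hX
  set F : ℕ → ℝ := fun m => ∑ p ∈ (Finset.Iic ⌊X ^ (1 / ((m : ℝ) + 2))⌋₊).filter Nat.Prime,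
      (p : ℝ) ^ (ℓ * (m + 2)) * Real.log p with hF
  have hFnonneg : ∀ m, 0 ≤ F m := by
    intro m
    refine Finset.sum_nonneg fun p hp => ?_
    have hp2 : 2 ≤ p := (Finset.mem_filter.mp hp).2.two_le
    exact mul_nonneg (pow_nonneg (by positivity) _)
      (Real.log_nonneg (by exact_mod_cast Nat.one_le_of_lt hp2))
  -- vanishing of F when 2^(m+2) > X
  have hFzero : ∀ m : ℕ, ¬ ((2:ℝ) ^ (m + 2) ≤ X) → F m = 0 := by
    intro m hm
    have hpow : (X ^ (1 / ((m:ℝ) + 2))) ^ (m + 2) = X := by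
      have hm2 : ((m:ℝ)+2) ≠ 0 := by positivity
      rw [← Real.rpow_natCast (X ^ (1 / ((m:ℝ) + 2))) (m+2), ← Real.rpow_mul hX0.le,
        one_div, show ((m+2:ℕ):ℝ) = (m:ℝ)+2 by push_cast; ring, inv_mul_cancel₀ hm2,
        Real.rpow_one]
    have h1 : X ^ (1 / ((m:ℝ) + 2)) < 2 := by
      by_contra h
      push_neg at h
      exact hm (by calc (2:ℝ)^(m+2) ≤ (X ^ (1/((m:ℝ)+2)))^(m+2) :=
          pow_le_pow_left₀ (by norm_num) h _
        _ = X := hpow)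
    have h2 : ⌊X ^ (1 / ((m:ℝ) + 2))⌋₊ < 2 := by
      rw [Nat.floor_lt (by positivity)]
      exact_mod_cast h1
    refine Finset.sum_eq_zero fun p hp => ?_
    rcases Finset.mem_filter.mp hp with ⟨hp1, hp2⟩
    exact absurd (le_trans hp2.two_le (Finset.mem_Iic.mp hp1)) (by omega)
  have hFzero' : ∀ m : ℕ, m ∉ Finset.range ⌊X⌋₊ → F m = 0 := by
    intro m hm
    rw [Finset.mem_range, not_lt] at hm
    refine hFzero m ?_
    push_neg
    have h1 : X < (⌊X⌋₊ : ℝ) + 1 := Nat.lt_floor_add_one X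
    have h2 : ⌊X⌋₊ + 1 ≤ 2 ^ (m + 2) := by
      calc ⌊X⌋₊ + 1 ≤ 2 ^ ⌊X⌋₊ := Nat.lt_two_pow_self
        _ ≤ 2 ^ (m + 2) := Nat.pow_le_pow_right (by norm_num) (by omega)
    calc X < (⌊X⌋₊ : ℝ) + 1 := h1
      _ ≤ 2 ^ (m + 2) := by exact_mod_cast h2
  have hsumm : Summable F := summable_of_ne_finset_zero (s := Finset.range ⌊X⌋₊) hFzero'
  -- Part 1
  have part1 : |(∑ j ∈ Finset.Icc 1 ⌊X⌋₊, A j * (j : ℝ) ^ ℓ) -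
        ∑ p ∈ (Finset.Icc 1 ⌊X⌋₊).filter Nat.Prime, A p * (p : ℝ) ^ ℓ| ≤ 4 * ∑' m, F m := by
    set S := Finset.Icc 1 ⌊X⌋₊ with hS
    set D := S.filter (fun j => ¬ j.Prime) with hD
    have hsplit : (∑ j ∈ S, A j * (j : ℝ) ^ ℓ) -
        ∑ p ∈ S.filter Nat.Prime, A p * (p : ℝ) ^ ℓ = ∑ j ∈ D, A j * (j : ℝ) ^ ℓ := by
      rw [← Finset.sum_filter_add_sum_filter_not S Nat.Prime (fun j => A j * (j : ℝ) ^ ℓ)]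
      ring
    rw [hsplit]
    have habs : |∑ j ∈ D, A j * (j : ℝ) ^ ℓ| ≤
        ∑ j ∈ D, 4 * ArithmeticFunction.vonMangoldt j * (j : ℝ) ^ ℓ := by
      refine le_trans (Finset.abs_sum_le_sum_abs _ _) (Finset.sum_le_sum fun j hj => ?_)
      rw [abs_mul, abs_pow, abs_of_nonneg (by positivity : (0:ℝ) ≤ (j:ℝ))]
      exact mul_le_mul_of_nonneg_right (hA j) (by positivity)
    refine le_trans habs ?_
    have h4 : ∑ j ∈ D, 4 * ArithmeticFunction.vonMangoldt j * (j : ℝ) ^ ℓ =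
        4 * ∑ j ∈ D, ArithmeticFunction.vonMangoldt j * (j : ℝ) ^ ℓ := by
      rw [Finset.mul_sum]; exact Finset.sum_congr rfl fun j _ => by ring
    rw [h4]
    have key : ∑ j ∈ D, ArithmeticFunction.vonMangoldt j * (j : ℝ) ^ ℓ ≤
        ∑ m ∈ Finset.range ⌊X⌋₊, F m := by
      set D' := D.filter IsPrimePow with hD'
      have hstep : ∑ j ∈ D, ArithmeticFunction.vonMangoldt j * (j : ℝ) ^ ℓ =
          ∑ j ∈ D', ArithmeticFunction.vonMangoldt j * (j : ℝ) ^ ℓ := by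
        refine (Finset.sum_subset (Finset.filter_subset _ _) fun j hj hj' => ?_).symm
        have hnp : ¬ IsPrimePow j := fun h => hj' (Finset.mem_filter.mpr ⟨hj, h⟩)
        rw [ArithmeticFunction.vonMangoldt_eq_zero_iff.mpr hnp, zero_mul]
      rw [hstep]
      have hstruct : ∀ j ∈ D', ∃ p k : ℕ, p.Prime ∧ 2 ≤ k ∧ p ^ k = j := by
        intro j hj
        rcases Finset.mem_filter.mp hj with ⟨hjD, hpp⟩
        obtain ⟨p, k, hp, hk, rfl⟩ := hpp
        have hp' : p.Prime := hp.nat_prime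
        refine ⟨p, k, hp', ?_, rfl⟩
        by_contra h
        have hk1 : k = 1 := by omega
        subst hk1
        exact (Finset.mem_filter.mp hjD).2 (by simpa using hp')
      set i : ℕ → (Σ _ : ℕ, ℕ) := fun j => ⟨j.factorization j.minFac - 2, j.minFac⟩ with hi
      set f : (Σ _ : ℕ, ℕ) → ℝ := fun q => (q.2:ℝ)^(ℓ*(q.1+2)) * Real.log q.2 with hf
      have hival : ∀ p k : ℕ, p.Prime → 2 ≤ k → i (p^k) = ⟨k-2, p⟩ := by
        intro p k hp hk
        have h1 : (p^k).minFac = p := by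
          rw [Nat.pow_minFac (by omega), hp.minFac_eq]
        have h2 : (p^k).factorization p = k := by
          rw [hp.factorization_pow, Finsupp.single_eq_same]
        simp only [hi, h1, h2]
      have hterm : ∀ j ∈ D', ArithmeticFunction.vonMangoldt j * (j : ℝ) ^ ℓ = f (i j) := by
        intro j hj
        obtain ⟨p, k, hp, hk, rfl⟩ := hstruct j hj
        rw [hival p k hp hk]
        have hk2 : k - 2 + 2 = k := by omega
        simp only [hf, hk2]
        rw [ArithmeticFunction.vonMangoldt_apply_pow (by omega),
          ArithmeticFunction.vonMangoldt_apply_prime hp]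
        push_cast
        rw [← pow_mul]
        ring
      have hinj : ∀ x ∈ D', ∀ y ∈ D', i x = i y → x = y := by
        intro x hx y hy hxy
        obtain ⟨p, k, hp, hk, rfl⟩ := hstruct x hx
        obtain ⟨q, l, hq, hl, rfl⟩ := hstruct y hy
        rw [hival p k hp hk, hival q l hq hl] at hxy
        have h1 : k - 2 = l - 2 ∧ p = q := by
          constructor
          · exact congrArg Sigma.fst hxy
          · have := congrArg Sigma.snd hxy; simpa using this
        obtain ⟨h2, rfl⟩ := h1
        have : k = l := by omega
        rw [this]
      have hsub : D'.image i ⊆ (Finset.range ⌊X⌋₊).sigma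
          (fun m => (Finset.Iic ⌊X ^ (1 / ((m:ℝ) + 2))⌋₊).filter Nat.Prime) := by
        intro q hq
        obtain ⟨j, hj, rfl⟩ := Finset.mem_image.mp hq
        obtain ⟨p, k, hp, hk, rfl⟩ := hstruct j hj
        rw [hival p k hp hk]
        have hjmem : p ^ k ∈ Finset.Icc 1 ⌊X⌋₊ :=
          Finset.mem_of_mem_filter _ (Finset.mem_of_mem_filter _ hj)
        have hjle : p ^ k ≤ ⌊X⌋₊ := (Finset.mem_Icc.mp hjmem).2
        have hk0 : (k:ℝ) ≠ 0 := by positivity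
        refine Finset.mem_sigma.mpr ⟨?_, ?_⟩
        · refine Finset.mem_range.mpr ?_
          show k - 2 < ⌊X⌋₊
          have h1 : k < 2 ^ k := Nat.lt_two_pow_self
          have h2 : 2 ^ k ≤ p ^ k := Nat.pow_le_pow_left hp.two_le k
          omega
        · show p ∈ (Finset.Iic ⌊X ^ (1 / (((k-2:ℕ):ℝ) + 2))⌋₊).filter Nat.Prime
          refine Finset.mem_filter.mpr ⟨Finset.mem_Iic.mpr ?_, hp⟩
          have hc : ((k - 2 : ℕ):ℝ) + 2 = (k:ℝ) := by
            have : (k - 2) + 2 = k := by omega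
            exact_mod_cast congrArg (Nat.cast (R := ℝ)) this
          rw [hc]
          refine Nat.le_floor ?_
          have hpk : (p:ℝ)^k ≤ X := by
            calc (p:ℝ)^k = ((p^k : ℕ):ℝ) := by push_cast; ring
              _ ≤ (⌊X⌋₊:ℝ) := by exact_mod_cast hjle
              _ ≤ X := Nat.floor_le hX0.le
          have h := Real.rpow_le_rpow (by positivity) hpk
            (by positivity : (0:ℝ) ≤ 1/(k:ℝ))
          rwa [← Real.rpow_natCast (p:ℝ) k, ← Real.rpow_mul (by positivity),
            mul_one_div_cancel hk0, Real.rpow_one] at h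
      calc ∑ j ∈ D', ArithmeticFunction.vonMangoldt j * (j : ℝ) ^ ℓ
          = ∑ j ∈ D', f (i j) := Finset.sum_congr rfl hterm
        _ = ∑ q ∈ D'.image i, f q := (Finset.sum_image hinj).symm
        _ ≤ ∑ q ∈ (Finset.range ⌊X⌋₊).sigma
            (fun m => (Finset.Iic ⌊X ^ (1 / ((m:ℝ) + 2))⌋₊).filter Nat.Prime), f q := by
            refine Finset.sum_le_sum_of_subset_of_nonneg hsub fun q hq _ => ?_
            have hq2 : q.2.Prime := (Finset.mem_filter.mp (Finset.mem_sigma.mp hq).2).2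
            exact mul_nonneg (by positivity)
              (Real.log_nonneg (by exact_mod_cast hq2.one_lt.le))
        _ = ∑ m ∈ Finset.range ⌊X⌋₊, F m := Finset.sum_sigma _ _ _
    have htail : ∑ m ∈ Finset.range ⌊X⌋₊, F m ≤ ∑' m, F m :=
      Summable.sum_le_tsum _ (fun m _ => hFnonneg m) hsumm
    have := le_trans key htail
    linarith
  refine ⟨part1, ?_⟩
  -- Part 2
  have htsum : ∑' m, F m = ∑ m ∈ Finset.range ⌊X⌋₊, F m := tsum_eq_sum hFzero'
  set E := (Finset.range ⌊X⌋₊).filter (fun m => (2:ℝ)^(m+2) ≤ X) with hE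
  have hEsum : ∑ m ∈ Finset.range ⌊X⌋₊, F m = ∑ m ∈ E, F m := by
    refine (Finset.sum_subset (Finset.filter_subset _ _) fun m hm hm' => ?_).symm
    exact hFzero m fun h => hm' (Finset.mem_filter.mpr ⟨hm, h⟩)
  have hXe : (0:ℝ) < X ^ ((ℓ:ℝ) + 1/2) := Real.rpow_pos_of_pos hX0 _
  have hbound : ∀ m ∈ E, F m ≤ 2.01 * X ^ ((ℓ:ℝ) + 1/2) := by
    intro m hm
    have h2X : (2:ℝ)^(m+2) ≤ X := (Finset.mem_filter.mp hm).2
    have hm2 : ((m:ℝ)+2) ≠ 0 := by positivity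
    have hY : 2 ≤ X ^ (1/((m:ℝ)+2)) := by
      have h := Real.rpow_le_rpow (by positivity) h2X
        (by positivity : (0:ℝ) ≤ 1/((m:ℝ)+2))
      rwa [← Real.rpow_natCast 2 (m+2), ← Real.rpow_mul (by norm_num),
        show ((m+2:ℕ):ℝ) = (m:ℝ)+2 by push_cast; ring,
        mul_one_div_cancel hm2, Real.rpow_one] at h
    refine le_trans (hRS _ (ℓ*(m+2)) hY) ?_
    have heq : (X ^ (1/((m:ℝ)+2))) ^ (ℓ*(m+2)+1) =
        X ^ ((1/((m:ℝ)+2)) * ((ℓ*(m+2)+1 : ℕ):ℝ)) := by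
      rw [← Real.rpow_natCast (X ^ (1/((m:ℝ)+2))) (ℓ*(m+2)+1), ← Real.rpow_mul hX0.le]
    have hexp : (1/((m:ℝ)+2)) * ((ℓ*(m+2)+1 : ℕ):ℝ) ≤ (ℓ:ℝ) + 1/2 := by
      have h1 : (1/((m:ℝ)+2)) * ((ℓ*(m+2)+1 : ℕ):ℝ) = (ℓ:ℝ) + 1/((m:ℝ)+2) := by
        push_cast; field_simp; try ring
      have h2 : 1/((m:ℝ)+2) ≤ 1/2 := by
        apply one_div_le_one_div_of_le (by norm_num)
        have : (0:ℝ) ≤ (m:ℝ) := Nat.cast_nonneg m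
        linarith
      rw [h1]; linarith
    have h3 := Real.rpow_le_rpow_of_exponent_le hX1 hexp
    rw [heq]
    nlinarith [h3]
  have hsum_le : ∑ m ∈ E, F m ≤ (E.card : ℝ) * (2.01 * X ^ ((ℓ:ℝ) + 1/2)) := by
    have := Finset.sum_le_card_nsmul E F (2.01 * X ^ ((ℓ:ℝ) + 1/2)) hbound
    rwa [nsmul_eq_mul] at this
  have hlog2 : (0:ℝ) < Real.log 2 := Real.log_pos (by norm_num)
  have hcard : (E.card : ℝ) ≤ Real.log X / Real.log 2 + 1 := by
    have hsub : E ⊆ Finset.range (⌊Real.log X / Real.log 2⌋₊ + 1) := by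
      intro m hm
      rcases Finset.mem_filter.mp hm with ⟨_, h2X⟩
      have hlog : ((m:ℝ)+2) * Real.log 2 ≤ Real.log X := by
        have h := Real.log_le_log (by positivity) h2X
        rwa [Real.log_pow, show ((m+2:ℕ):ℝ) = (m:ℝ)+2 by push_cast; ring] at h
      have hm' : (m:ℝ) ≤ Real.log X / Real.log 2 := by
        rw [le_div_iff₀ hlog2]
        nlinarith [hlog2, Nat.cast_nonneg (α := ℝ) m]
      have hmf := Nat.le_floor hm'
      exact Finset.mem_range.mpr (by omega)
    have h1 : E.card ≤ ⌊Real.log X / Real.log 2⌋₊ + 1 := by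
      have := Finset.card_le_card hsub
      simpa using this
    have h2 : (⌊Real.log X / Real.log 2⌋₊ : ℝ) ≤ Real.log X / Real.log 2 :=
      Nat.floor_le (div_nonneg (Real.log_nonneg hX1) hlog2.le)
    calc (E.card : ℝ) ≤ (⌊Real.log X / Real.log 2⌋₊ : ℝ) + 1 := by exact_mod_cast h1
      _ ≤ Real.log X / Real.log 2 + 1 := by linarith
  have hlogX : Real.log 2 ≤ Real.log X := Real.log_le_log (by norm_num) hX
  have hl2lo : (0.6931471803 : ℝ) < Real.log 2 := Real.log_two_gt_d9
  have hl2hi : Real.log 2 < 0.6931471808 := Real.log_two_lt_d9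
  have hkey : 8.04 * (Real.log X / Real.log 2 + 1) ≤ 26.72 * Real.log X := by
    have ht : Real.log X = (Real.log X / Real.log 2) * Real.log 2 :=
      (div_mul_cancel₀ _ hlog2.ne').symm
    have ht1 : 1 ≤ Real.log X / Real.log 2 := (one_le_div hlog2).mpr hlogX
    nlinarith [ht, ht1, hl2lo,
      mul_nonneg (le_trans zero_le_one ht1) (sub_nonneg.mpr hl2lo.le)]
  calc 4 * ∑' m, F m = 4 * ∑ m ∈ E, F m := by rw [htsum, hEsum]
    _ ≤ 4 * ((E.card : ℝ) * (2.01 * X ^ ((ℓ:ℝ) + 1/2))) := by linarith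
    _ = (8.04 * (E.card : ℝ)) * X ^ ((ℓ:ℝ) + 1/2) := by ring
    _ ≤ (8.04 * (Real.log X / Real.log 2 + 1)) * X ^ ((ℓ:ℝ) + 1/2) := by nlinarith [hcard, hXe.le]
    _ ≤ (26.72 * Real.log X) * X ^ ((ℓ:ℝ) + 1/2) := by nlinarith [hkey, hXe.le]
    _ = 26.72 * X ^ ((ℓ:ℝ) + 1/2) * Real.log X := by ring
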